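/- Let R be a commutative ring, I and J ideals of R, and M and N R-modules. If M is (I,J)-coprime, then the R-module Hom_R(M,N) is (I,J)-prime. Conversely, if N is an injective R-module which is a cogenerator (for every R-module X and every nonzero x ∈ X there exists g : X → N R-linear with g(x) ≠ 0) and Hom_R(M,N) is (I,J)-prime, then M is (I,J)-coprime. -/

import Mathlib

/-- An `R`-module `P` is `(I,J)`-prime if for all `p ∈ P`, `(I*J) • p = 0` implies
that either `I • p = 0` or `J • p = 0`. -/
def IsIJPrime {R : Type*} [CommRing R] (I J : Ideal R) (P : Type*) [AddCommGroup P]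
    [Module R P] : Prop :=
  ∀ p : P, (∀ a ∈ I * J, a • p = 0) → (∀ a ∈ I, a • p = 0) ∨ (∀ a ∈ J, a • p = 0)

/-- An `R`-module `M` is `(I,J)`-coprime if either `(I*J) • M = I • M` or `(I*J) • M = J • M`. -/
def IsIJCoprime {R : Type*} [CommRing R] (I J : Ideal R) (M : Type*) [AddCommGroup M]
    [Module R M] : Prop :=
  (I * J) • (⊤ : Submodule R M) = I • (⊤ : Submodule R M) ∨
    (I * J) • (⊤ : Submodule R M) = J • (⊤ : Submodule R M)

lemma smul_hom_eq_zero_iff {R : Type u} [CommRing R] (S : Ideal R)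
    {M : Type v} {N : Type w} [AddCommGroup M] [Module R M] [AddCommGroup N] [Module R N]
    (f : M →ₗ[R] N) :
    (∀ a ∈ S, a • f = 0) ↔ ∀ x ∈ S • (⊤ : Submodule R M), f x = 0 := by
  constructor
  · intro h x hx
    refine Submodule.smul_induction_on hx (fun r hr m _ => ?_) (fun a b ha hb => ?_)
    · have := congrArg (fun g : M →ₗ[R] N => g m) (h r hr)
      simpa [map_smul] using this
    · simp [map_add, ha, hb]
  · intro h a ha
    ext m
    have hm : a • m ∈ S • (⊤ : Submodule R M) := Submodule.smul_mem_smul ha trivial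
    have := h _ hm
    simpa [map_smul] using this

/-- If `M` is `(I,J)`-coprime then `Hom_R(M,N)` is `(I,J)`-prime; the converse holds when
`N` is an injective cogenerator. -/
theorem stmt_17 {R : Type u} [CommRing R] (I J : Ideal R) (M : Type v) (N : Type w)
    [AddCommGroup M] [Module R M] [AddCommGroup N] [Module R N] :
    (IsIJCoprime I J M → IsIJPrime I J (M →ₗ[R] N)) ∧
    (Module.Injective R N →
      (∀ (X : Type v) [AddCommGroup X] [Module R X] (x : X), x ≠ 0 →
        ∃ g : X →ₗ[R] N, g x ≠ 0) →
      IsIJPrime I J (M →ₗ[R] N) → IsIJCoprime I J M) := by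
  constructor
  · intro h f hf
    rw [smul_hom_eq_zero_iff] at hf
    rcases h with h | h
    · left; rw [smul_hom_eq_zero_iff, ← h]; exact hf
    · right; rw [smul_hom_eq_zero_iff, ← h]; exact hf
  · intro _ hcog hprime
    by_contra hco
    rw [IsIJCoprime, not_or] at hco
    obtain ⟨h1, h2⟩ := hco
    have leI : (I*J) • (⊤ : Submodule R M) ≤ I • ⊤ :=
      Submodule.smul_mono_left Ideal.mul_le_left
    have leJ : (I*J) • (⊤ : Submodule R M) ≤ J • ⊤ :=
      Submodule.smul_mono_left Ideal.mul_le_right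
    obtain ⟨x, hxI, hxIJ⟩ := SetLike.exists_of_lt (lt_of_le_of_ne leI h1)
    obtain ⟨y, hyJ, hyIJ⟩ := SetLike.exists_of_lt (lt_of_le_of_ne leJ h2)
    set K : Submodule R M := (I*J) • ⊤ with hK
    have hx0 : K.mkQ x ≠ 0 := by
      simpa [Submodule.Quotient.mk_eq_zero] using hxIJ
    have hy0 : K.mkQ y ≠ 0 := by
      simpa [Submodule.Quotient.mk_eq_zero] using hyIJ
    obtain ⟨g₁, hg₁⟩ := hcog (M ⧸ K) (K.mkQ x) hx0
    obtain ⟨g₂, hg₂⟩ := hcog (M ⧸ K) (K.mkQ y) hy0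
    have kill : ∀ g : (M ⧸ K) →ₗ[R] N, ∀ a ∈ I*J, a • (g.comp K.mkQ) = 0 := by
      intro g
      rw [smul_hom_eq_zero_iff]
      intro z hz
      have : K.mkQ z = 0 := (Submodule.Quotient.mk_eq_zero K).mpr hz
      simp [LinearMap.comp_apply, this]
    have hmain : ∃ f : M →ₗ[R] N, (∀ a ∈ I*J, a • f = 0) ∧
        (∃ z ∈ I • (⊤ : Submodule R M), f z ≠ 0) ∧
        (∃ z ∈ J • (⊤ : Submodule R M), f z ≠ 0) := by
      by_cases hc1 : ∃ z ∈ J • (⊤ : Submodule R M), g₁ (K.mkQ z) ≠ 0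
      · obtain ⟨z, hz, hz'⟩ := hc1
        exact ⟨g₁.comp K.mkQ, kill g₁, ⟨x, hxI, hg₁⟩, ⟨z, hz, hz'⟩⟩
      · by_cases hc2 : ∃ z ∈ I • (⊤ : Submodule R M), g₂ (K.mkQ z) ≠ 0
        · obtain ⟨z, hz, hz'⟩ := hc2
          exact ⟨g₂.comp K.mkQ, kill g₂, ⟨z, hz, hz'⟩, ⟨y, hyJ, hg₂⟩⟩
        · push_neg at hc1 hc2
          refine ⟨(g₁ + g₂).comp K.mkQ, kill _, ⟨x, hxI, ?_⟩, ⟨y, hyJ, ?_⟩⟩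
          · have e : g₂ (Submodule.Quotient.mk x) = 0 := by simpa using hc2 x hxI
            simpa [LinearMap.comp_apply, e] using hg₁
          · have e : g₁ (Submodule.Quotient.mk y) = 0 := by simpa using hc1 y hyJ
            simpa [LinearMap.comp_apply, e] using hg₂
    obtain ⟨f, hf, ⟨z1, hz1, hz1'⟩, ⟨z2, hz2, hz2'⟩⟩ := hmain
    rcases hprime f hf with h | h
    · exact hz1' (((smul_hom_eq_zero_iff I f).mp h) z1 hz1)
    · exact hz2' (((smul_hom_eq_zero_iff J f).mp h) z2 hz2)
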